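/- The iterative color refinement restricted to in-neighborhoods terminates on any finite directed graph: starting from the coloring by in-degree and repeatedly refining by the multiset of in-neighbor colors, the sequence of partitions stabilizes after at most |N_G| − 1 iterations, and the resulting stable partition is the coarsest balanced partition refining the initial coloring. -/

import Mathlib

/-- A finite directed multigraph: a node type, an edge type, and source/target maps. -/
structure FinDigraph where
  V : Type
  E : Type
  [finV : Finite V]
  [finE : Finite E]
  src : E → V
  tgt : E → V

attribute [instance] FinDigraph.finV FinDigraph.finE

namespace FinDigraph

/-- The far endpoint of a (reversed) path ending at `u`: the list `[e_k, …, e_1]`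
represents the directed path `src e_k → ⋯ → tgt e_1 = u`. -/
def farEnd (G : FinDigraph) (u : G.V) : List G.E → G.V
  | [] => u
  | e :: _ => G.src e

/-- `l = [e_k, …, e_1]` is a directed path of `G` ending at `u`. -/
def IsInPath (G : FinDigraph) (u : G.V) : List G.E → Prop
  | [] => True
  | e :: es => IsInPath G u es ∧ G.tgt e = G.farEnd u es

/-- The nodes of the input tree of `u`: all directed paths ending at `u`. -/
def InPath (G : FinDigraph) (u : G.V) : Type := {l : List G.E // G.IsInPath u l}

/-- The root of the input tree of `u` (the empty path). -/
def root (G : FinDigraph) (u : G.V) : G.InPath u := ⟨[], trivial⟩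

/-- The parent of a path in the input tree (drop the farthest edge); the root is its own parent. -/
def parent (G : FinDigraph) (u : G.V) : G.InPath u → G.InPath u
  | ⟨[], h⟩ => ⟨[], h⟩
  | ⟨_ :: es, h⟩ => ⟨es, h.1⟩

/-- Isomorphism of input trees: a bijection of paths preserving root, depth and parent. -/
def InTreeIso (G : FinDigraph) (u : G.V) (H : FinDigraph) (v : H.V) : Prop :=
  ∃ F : G.InPath u ≃ H.InPath v,
    F (G.root u) = H.root v ∧
    (∀ p, ((F p).1).length = (p.1).length) ∧
    (∀ p, F (G.parent u p) = H.parent v (F p))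

/-- The reverse graph (all edges flipped). -/
def rev (G : FinDigraph) : FinDigraph :=
  { V := G.V, E := G.E, src := G.tgt, tgt := G.src }

/-- Isomorphism of output trees = isomorphism of input trees in the reverse graphs. -/
def OutTreeIso (G : FinDigraph) (u : G.V) (H : FinDigraph) (v : H.V) : Prop :=
  InTreeIso (rev G) u (rev H) v

/-- A homomorphism of directed multigraphs. -/
structure Hom (G H : FinDigraph) where
  onV : G.V → H.V
  onE : G.E → H.E
  map_src : ∀ e, H.src (onE e) = onV (G.src e)
  map_tgt : ∀ e, H.tgt (onE e) = onV (G.tgt e)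

/-- Isomorphism of directed multigraphs. -/
def IsIso (G H : FinDigraph) : Prop :=
  ∃ φ : Hom G H, Function.Bijective φ.onV ∧ Function.Bijective φ.onE

/-- Fibration equivalence of nodes: isomorphic input trees. -/
def fibEquiv (G : FinDigraph) (u v : G.V) : Prop := InTreeIso G u G v

/-- Covering equivalence of nodes: isomorphic input trees and isomorphic output trees. -/
def covEquiv (G : FinDigraph) (u v : G.V) : Prop :=
  InTreeIso G u G v ∧ OutTreeIso G u G v

/-- Orbit equivalence: some automorphism maps one node to the other. -/
def orbitEquiv (G : FinDigraph) (u v : G.V) : Prop :=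
  ∃ φ : Hom G G, Function.Bijective φ.onV ∧ Function.Bijective φ.onE ∧ φ.onV u = v

theorem inTreeIso_refl (G : FinDigraph) (u : G.V) : InTreeIso G u G u :=
  ⟨Equiv.refl _, rfl, fun _ => rfl, fun _ => rfl⟩

theorem inTreeIso_symm {G : FinDigraph} {u : G.V} {H : FinDigraph} {v : H.V}
    (h : InTreeIso G u H v) : InTreeIso H v G u := by
  obtain ⟨F, hroot, hlen, hpar⟩ := h
  refine ⟨F.symm, ?_, ?_, ?_⟩
  · rw [← hroot, Equiv.symm_apply_apply]
  · intro p; rw [← hlen (F.symm p), Equiv.apply_symm_apply]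
  · intro p
    apply F.injective
    rw [Equiv.apply_symm_apply, hpar (F.symm p), Equiv.apply_symm_apply]

theorem inTreeIso_trans {G : FinDigraph} {u : G.V} {H : FinDigraph} {v : H.V}
    {K : FinDigraph} {w : K.V}
    (h₁ : InTreeIso G u H v) (h₂ : InTreeIso H v K w) : InTreeIso G u K w := by
  obtain ⟨F, fr, fl, fp⟩ := h₁
  obtain ⟨F', gr, gl, gp⟩ := h₂
  refine ⟨F.trans F', ?_, ?_, ?_⟩
  · simp [Equiv.trans_apply, fr, gr]
  · intro p; simp [Equiv.trans_apply, gl, fl]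
  · intro p; simp [Equiv.trans_apply, fp, gp]

/-- The setoid of fibration equivalence (isomorphism of input trees). -/
def fibSetoid (G : FinDigraph) : Setoid G.V :=
  ⟨fibEquiv G, ⟨fun u => inTreeIso_refl G u, inTreeIso_symm, inTreeIso_trans⟩⟩

/-- The minimal fibration base of `G`: nodes are the fibers (input-tree isomorphism
classes), and the edges from a fiber `C'` into a fiber `C` are the edges of `G` from
nodes of `C'` into the chosen representative of `C`. -/
def base (G : FinDigraph) : FinDigraph where
  V := Quotient (fibSetoid G)
  E := {e : G.E // G.tgt e = (Quotient.mk (fibSetoid G) (G.tgt e)).out}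
  src e := Quotient.mk (fibSetoid G) (G.src e.1)
  tgt e := Quotient.mk (fibSetoid G) (G.tgt e.1)

/-- The fiber of a node, as a node of the minimal base. -/
def fibClass (G : FinDigraph) (u : G.V) : (base G).V := Quotient.mk (fibSetoid G) u

/-- A partition (given as an equivalence relation) is balanced if any two equivalent
nodes receive the same number of edges from each class. -/
def IsBalanced (G : FinDigraph) (r : G.V → G.V → Prop) : Prop :=
  Equivalence r ∧ ∀ u v, r u v → ∀ w : G.V,
    Nat.card {e : G.E // G.tgt e = u ∧ r (G.src e) w} =
    Nat.card {e : G.E // G.tgt e = v ∧ r (G.src e) w}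

/-- The multiset of states of the in-neighbors of `u` (with edge multiplicity). -/
noncomputable def inStates (G : FinDigraph) {S : Type} (x : G.V → S) (u : G.V) :
    Multiset S :=
  letI := Fintype.ofFinite G.E
  letI := Classical.decEq G.V
  (Finset.univ.filter (fun e => G.tgt e = u)).val.map fun e => x (G.src e)

end FinDigraph

namespace FinDigraph

/-- The initial coloring of in-neighborhood color refinement: color by in-degree. -/
def wlInit (G : FinDigraph) (u v : G.V) : Prop :=
  Nat.card {e : G.E // G.tgt e = u} = Nat.card {e : G.E // G.tgt e = v}

/-- One refinement step: keep the current color and add the multiset of in-neighbor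
colors (expressed via counts of in-edges from each current class). -/
def refineStep (G : FinDigraph) (r : G.V → G.V → Prop) : G.V → G.V → Prop :=
  fun u v => r u v ∧ ∀ w : G.V,
    Nat.card {e : G.E // G.tgt e = u ∧ r (G.src e) w} =
    Nat.card {e : G.E // G.tgt e = v ∧ r (G.src e) w}

/-- The sequence of partitions produced by in-neighborhood color refinement. -/
def wlSeq (G : FinDigraph) : ℕ → (G.V → G.V → Prop)
  | 0 => wlInit G
  | t + 1 => refineStep G (wlSeq G t)

end FinDigraph

namespace FinDigraph

lemma wl_aux_wlInit_equiv (G : FinDigraph) : Equivalence (wlInit G) :=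
  ⟨fun _ => rfl, fun h => h.symm, fun h1 h2 => h1.trans h2⟩

lemma wl_aux_refineStep_equiv (G : FinDigraph) {r : G.V → G.V → Prop}
    (hr : Equivalence r) : Equivalence (refineStep G r) :=
  ⟨fun u => ⟨hr.refl u, fun _ => rfl⟩,
   fun h => ⟨hr.symm h.1, fun w => (h.2 w).symm⟩,
   fun h1 h2 => ⟨hr.trans h1.1 h2.1, fun w => (h1.2 w).trans (h2.2 w)⟩⟩

lemma wl_aux_wlSeq_equiv (G : FinDigraph) : ∀ t, Equivalence (wlSeq G t)
  | 0 => wl_aux_wlInit_equiv G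
  | t + 1 => wl_aux_refineStep_equiv G (wl_aux_wlSeq_equiv G t)

lemma wl_aux_card_congr (G : FinDigraph) {P Q : G.E → Prop} (h : ∀ e, P e ↔ Q e) :
    Nat.card {e // P e} = Nat.card {e // Q e} :=
  Nat.card_congr (Equiv.subtypeEquivRight h)

lemma wl_aux_refineStep_congr (G : FinDigraph) {r r' : G.V → G.V → Prop}
    (h : ∀ a b, r a b ↔ r' a b) (u v : G.V) :
    refineStep G r u v ↔ refineStep G r' u v := by
  unfold refineStep
  constructor
  · rintro ⟨h1, h2⟩
    refine ⟨(h u v).mp h1, fun w => ?_⟩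
    rw [← wl_aux_card_congr G (P := fun e => G.tgt e = u ∧ r (G.src e) w)
        (fun e => and_congr_right fun _ => h _ _),
      ← wl_aux_card_congr G (P := fun e => G.tgt e = v ∧ r (G.src e) w)
        (fun e => and_congr_right fun _ => h _ _)]
    exact h2 w
  · rintro ⟨h1, h2⟩
    refine ⟨(h u v).mpr h1, fun w => ?_⟩
    rw [wl_aux_card_congr G (P := fun e => G.tgt e = u ∧ r (G.src e) w)
        (fun e => and_congr_right fun _ => h _ _),
      wl_aux_card_congr G (P := fun e => G.tgt e = v ∧ r (G.src e) w)
        (fun e => and_congr_right fun _ => h _ _)]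
    exact h2 w

lemma wl_aux_stable_all (G : FinDigraph) {t : ℕ}
    (hst : ∀ u v, wlSeq G (t + 1) u v ↔ wlSeq G t u v) :
    ∀ t', t ≤ t' → ∀ u v, wlSeq G t' u v ↔ wlSeq G t u v := by
  intro t' ht
  induction t' , ht using Nat.le_induction with
  | base => exact fun u v => Iff.rfl
  | succ m hm ih =>
    intro u v
    exact (wl_aux_refineStep_congr G ih u v).trans (hst u v)

lemma wl_aux_quot_lt {α : Type} [Finite α] (r r' : α → α → Prop)
    (hr : Equivalence r) (hr' : Equivalence r')
    (hsub : ∀ a b, r' a b → r a b) {u v : α} (huv : r u v) (hnuv : ¬ r' u v) :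
    Nat.card (Quotient (⟨r, hr⟩ : Setoid α)) <
      Nat.card (Quotient (⟨r', hr'⟩ : Setoid α)) := by
  classical
  letI S : Setoid α := ⟨r, hr⟩
  letI S' : Setoid α := ⟨r', hr'⟩
  letI := Fintype.ofFinite α
  letI : Fintype (Quotient S) := Quotient.fintype S
  letI : Fintype (Quotient S') := Quotient.fintype S'
  set g : Quotient S → Quotient S' := fun c => Quotient.mk S' c.out with hg
  have hginj : Function.Injective g := by
    intro c d hcd
    have : r c.out d.out := hsub _ _ (Quotient.exact hcd)
    have := Quotient.sound (s := S) this
    rwa [Quotient.out_eq, Quotient.out_eq] at this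
  have hgnsurj : ¬ Function.Surjective g := by
    intro hsurj
    obtain ⟨c, hc⟩ := hsurj (Quotient.mk S' u)
    obtain ⟨d, hd⟩ := hsurj (Quotient.mk S' v)
    have hcu : r' c.out u := Quotient.exact hc
    have hdv : r' d.out v := Quotient.exact hd
    have hcd : c = d := by
      have : r c.out d.out :=
        hr.trans (hsub _ _ hcu) (hr.trans huv (hr.symm (hsub _ _ hdv)))
      have := Quotient.sound (s := S) this
      rwa [Quotient.out_eq, Quotient.out_eq] at this
    exact hnuv (hr'.trans (hr'.symm hcu) (hcd ▸ hdv))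
  rw [Nat.card_eq_fintype_card, Nat.card_eq_fintype_card]
  exact Fintype.card_lt_of_injective_not_surjective g hginj hgnsurj

lemma wl_aux_balanced_count (G : FinDigraph) (s rt : G.V → G.V → Prop)
    (hs : IsBalanced G s) (hrt : Equivalence rt) (hsub : ∀ a b, s a b → rt a b)
    {u v : G.V} (huv : s u v) (w : G.V) :
    Nat.card {e : G.E // G.tgt e = u ∧ rt (G.src e) w} =
    Nat.card {e : G.E // G.tgt e = v ∧ rt (G.src e) w} := by
  classical
  letI := Fintype.ofFinite G.V
  letI := Fintype.ofFinite G.E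
  letI S : Setoid G.V := ⟨s, hs.1⟩
  set reps : Finset G.V := Finset.univ.image (Quotient.out : Quotient S → G.V) with hreps
  have hcard : ∀ (P : G.E → Prop) [DecidablePred P],
      Nat.card {e // P e} = (Finset.univ.filter P).card := by
    intro P _
    rw [Nat.card_eq_fintype_card, Fintype.card_subtype]
  have key : ∀ x : G.V,
      Nat.card {e : G.E // G.tgt e = x ∧ rt (G.src e) w} =
        ∑ w' ∈ reps.filter (fun w' => rt w' w),
          Nat.card {e : G.E // G.tgt e = x ∧ s (G.src e) w'} := by
    intro x
    rw [hcard]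
    have := Finset.card_eq_sum_card_fiberwise
      (s := Finset.univ.filter (fun e => G.tgt e = x ∧ rt (G.src e) w))
      (t := reps.filter (fun w' => rt w' w))
      (f := fun e => (Quotient.mk S (G.src e)).out) ?_
    · rw [this]
      apply Finset.sum_congr rfl
      intro w' hw'
      rw [Finset.mem_filter] at hw'
      obtain ⟨hw'reps, hw'rt⟩ := hw'
      rw [hcard, Finset.filter_filter]
      congr 1
      apply Finset.filter_congr
      intro e _
      have hout : s ((Quotient.mk S (G.src e)).out) (G.src e) :=
        Quotient.exact (Quotient.out_eq (Quotient.mk S (G.src e)))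
      constructor
      · rintro ⟨⟨h1, _⟩, h3⟩
        exact ⟨h1, hs.1.symm (h3 ▸ hout)⟩
      · rintro ⟨h1, h2⟩
        refine ⟨⟨h1, hrt.trans (hsub _ _ h2) hw'rt⟩, ?_⟩
        have hmk : Quotient.mk S (G.src e) = Quotient.mk S w' := Quotient.sound h2
        rw [hmk]
        rw [hreps, Finset.mem_image] at hw'reps
        obtain ⟨q, _, hq⟩ := hw'reps
        rw [← hq, Quotient.out_eq]
    · intro e he
      rw [Finset.mem_coe, Finset.mem_filter] at he ⊢
      have hout : s ((Quotient.mk S (G.src e)).out) (G.src e) :=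
        Quotient.exact (Quotient.out_eq (Quotient.mk S (G.src e)))
      exact ⟨Finset.mem_image_of_mem _ (Finset.mem_univ _),
        hrt.trans (hsub _ _ hout) he.2.2⟩
  rw [key u, key v]
  exact Finset.sum_congr rfl fun w' _ => hs.2 u v huv w'

lemma wl_aux_refines_init (G : FinDigraph) : ∀ t u v, wlSeq G t u v → wlInit G u v
  | 0, _, _, h => h
  | t + 1, u, v, h => wl_aux_refines_init G t u v h.1

lemma wl_aux_coarsest (G : FinDigraph) (s : G.V → G.V → Prop)
    (hs : IsBalanced G s) (hinit : ∀ u v, s u v → wlInit G u v) :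
    ∀ t u v, s u v → wlSeq G t u v
  | 0, u, v, h => hinit u v h
  | t + 1, u, v, h =>
    ⟨wl_aux_coarsest G s hs hinit t u v h,
     fun w => wl_aux_balanced_count G s (wlSeq G t) hs (wl_aux_wlSeq_equiv G t)
       (fun a b hab => wl_aux_coarsest G s hs hinit t a b hab) h w⟩

lemma wl_aux_exists_stable (G : FinDigraph) :
    ∃ t ≤ Nat.card G.V - 1, ∀ u v, wlSeq G (t + 1) u v ↔ wlSeq G t u v := by
  classical
  set n := Nat.card G.V with hn
  by_contra hcon
  push_neg at hcon
  cases isEmpty_or_nonempty G.V with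
  | inl he =>
    obtain ⟨u, -, -⟩ := hcon 0 (Nat.zero_le _)
    exact he.elim u
  | inr hne =>
    have hn1 : 1 ≤ n := Nat.one_le_iff_ne_zero.mpr (Nat.card_ne_zero.mpr ⟨hne, G.finV⟩)
    set nc : ℕ → ℕ := fun t =>
      Nat.card (Quotient (⟨wlSeq G t, wl_aux_wlSeq_equiv G t⟩ : Setoid G.V)) with hnc
    have hncle : ∀ t, nc t ≤ n := by
      intro t
      exact Nat.card_le_card_of_surjective
        (Quotient.mk (⟨wlSeq G t, wl_aux_wlSeq_equiv G t⟩ : Setoid G.V))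
        (Quotient.mk_surjective)
    have hgrow : ∀ t, t ≤ n → t + 1 ≤ nc t := by
      intro t
      induction t with
      | zero =>
        intro _
        have : Nonempty (Quotient (⟨wlSeq G 0, wl_aux_wlSeq_equiv G 0⟩ : Setoid G.V)) :=
          ⟨Quotient.mk _ (Classical.arbitrary G.V)⟩
        exact Nat.one_le_iff_ne_zero.mpr (Nat.card_ne_zero.mpr ⟨this, inferInstance⟩)
      | succ m ih =>
        intro hmn
        have hm : m ≤ n - 1 := by omega
        obtain ⟨u, v, huv⟩ := hcon m hm
        have h1 : wlSeq G m u v ∧ ¬ wlSeq G (m + 1) u v := by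
          rcases huv with ⟨h, h'⟩ | ⟨h, h'⟩
          · exact absurd h.1 h'
          · exact ⟨h', h⟩
        have hlt : nc m < nc (m + 1) :=
          wl_aux_quot_lt (wlSeq G m) (wlSeq G (m + 1))
            (wl_aux_wlSeq_equiv G m) (wl_aux_wlSeq_equiv G (m + 1))
            (fun a b hab => hab.1) h1.1 h1.2
        have := ih (by omega)
        omega
    have := hgrow n le_rfl
    have := hncle n
    omega

end FinDigraph

/-- in-neighborhood color refinement stabilizes after at most
`|N_G| - 1` iterations, and the stable partition is the coarsest balanced partition
refining the initial (in-degree) coloring. -/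
theorem wl_refinement_terminates (G : FinDigraph) :
    (∀ t, Nat.card G.V - 1 ≤ t →
      ∀ u v, FinDigraph.wlSeq G t u v ↔ FinDigraph.wlSeq G (Nat.card G.V - 1) u v) ∧
    FinDigraph.IsBalanced G (FinDigraph.wlSeq G (Nat.card G.V - 1)) ∧
    (∀ u v, FinDigraph.wlSeq G (Nat.card G.V - 1) u v → FinDigraph.wlInit G u v) ∧
    (∀ s : G.V → G.V → Prop, FinDigraph.IsBalanced G s →
      (∀ u v, s u v → FinDigraph.wlInit G u v) →
      ∀ u v, s u v → FinDigraph.wlSeq G (Nat.card G.V - 1) u v) := by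
  set T := Nat.card G.V - 1 with hT
  obtain ⟨t0, ht0le, ht0⟩ := FinDigraph.wl_aux_exists_stable G
  have hTeq : ∀ u v, FinDigraph.wlSeq G T u v ↔ FinDigraph.wlSeq G t0 u v :=
    FinDigraph.wl_aux_stable_all G ht0 T ht0le
  have hTstable : ∀ u v, FinDigraph.wlSeq G (T + 1) u v ↔ FinDigraph.wlSeq G T u v := by
    intro u v
    exact (FinDigraph.wl_aux_stable_all G ht0 (T + 1)
      (le_trans ht0le (Nat.le_succ T)) u v).trans (hTeq u v).symm
  refine ⟨?_, ⟨FinDigraph.wl_aux_wlSeq_equiv G T, ?_⟩, ?_, ?_⟩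
  · intro t ht u v
    exact FinDigraph.wl_aux_stable_all G hTstable t ht u v
  · intro u v h w
    exact ((hTstable u v).mpr h).2 w
  · exact fun u v => FinDigraph.wl_aux_refines_init G T u v
  · intro s hs hinit u v hsuv
    exact FinDigraph.wl_aux_coarsest G s hs hinit T u v hsuv
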